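/- Let Σ be a d × d real symmetric positive semidefinite matrix and let σ > 0. Then the matrix I + σ⁻²·Σ is positive definite (so its determinant is positive), and trace(Σ)/σ² − log(det(I + σ⁻²·Σ)) ≤ ‖Σ‖_F² / (2σ⁴), where ‖Σ‖_F² = trace(Σᵀ Σ) is the squared Frobenius norm. -/

import Mathlib

open Matrix

lemma scalar_aux {x : ℝ} (hx : 0 ≤ x) : x - Real.log (1 + x) ≤ x ^ 2 / 2 := by
  set f : ℝ → ℝ := fun x => Real.log (1 + x) - x + x ^ 2 / 2 with hf
  have key : ∀ y ∈ Set.Ici (0:ℝ), HasDerivAt f ((1 + y)⁻¹ - 1 + y) y := by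
    intro y hy
    have h1 : (0:ℝ) < 1 + y := by simp at hy; linarith
    have hlog : HasDerivAt (fun z : ℝ => Real.log (1 + z)) ((1 + y)⁻¹) y := by
      have := (Real.hasDerivAt_log h1.ne').comp y ((hasDerivAt_id y).const_add 1)
      simpa [Function.comp_def] using this
    have : HasDerivAt f ((1 + y)⁻¹ - 1 + ((2:ℕ) * y ^ (2-1) / 2)) y :=
      ((hlog.sub (hasDerivAt_id y)).add (((hasDerivAt_pow 2 y).div_const 2)))
    convert this using 1
    ring
  have hmono : MonotoneOn f (Set.Ici 0) := by
    apply monotoneOn_of_deriv_nonneg (convex_Ici 0)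
    · exact ContinuousOn.congr (continuousOn_of_forall_continuousAt
        (fun y hy => (key y hy).continuousAt)) (fun y hy => rfl)
    · intro y hy
      exact ((key y (interior_subset hy)).differentiableAt).differentiableWithinAt
    · intro y hy
      simp only [interior_Ici, Set.mem_Ioi] at hy
      rw [(key y (le_of_lt hy)).deriv]
      have h1 : (0:ℝ) < 1 + y := by linarith
      have : (1 + y)⁻¹ ≥ 1 - y := by
        rw [ge_iff_le, ← sub_nonneg]
        have : (1+y)⁻¹ - (1 - y) = y^2 / (1+y) := by field_simp; ring
        rw [this]; positivity
      linarith
  have h0 : f 0 ≤ f x := hmono (by simp) hx (by simpa using hx)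
  simp only [hf] at h0
  norm_num at h0
  linarith

theorem stmt_13 {d : ℕ} (S : Matrix (Fin d) (Fin d) ℝ) (hS : S.PosSemidef)
    (σ : ℝ) (hσ : 0 < σ) :
    ((1 : Matrix (Fin d) (Fin d) ℝ) + (σ ^ 2)⁻¹ • S).PosDef ∧
      0 < ((1 : Matrix (Fin d) (Fin d) ℝ) + (σ ^ 2)⁻¹ • S).det ∧
      S.trace / σ ^ 2 -
          Real.log (((1 : Matrix (Fin d) (Fin d) ℝ) + (σ ^ 2)⁻¹ • S).det) ≤
        (Sᵀ * S).trace / (2 * σ ^ 4) := by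
  set c : ℝ := (σ ^ 2)⁻¹ with hc
  have hcpos : 0 < c := by positivity
  have hcS : (c • S).PosSemidef := by
    refine ⟨?_, fun x => ?_⟩
    · unfold Matrix.IsHermitian
      rw [Matrix.conjTranspose_smul, hS.isHermitian]
      simp
    · have h := mul_nonneg hcpos.le (hS.2 x)
      simp only [Finsupp.mul_sum] at h
      simp only [Matrix.smul_apply, smul_eq_mul]
      exact le_of_le_of_eq h
        (Finsupp.sum_congr fun i _ => Finsupp.sum_congr fun j _ => by ring)
  have hPD : ((1 : Matrix (Fin d) (Fin d) ℝ) + c • S).PosDef :=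
    Matrix.PosDef.add_posSemidef Matrix.PosDef.one hcS
  refine ⟨hPD, hPD.det_pos, ?_⟩
  -- spectral decomposition
  have hH := hS.isHermitian
  set μ := hH.eigenvalues with hμ
  have hμ0 : ∀ i, 0 ≤ μ i := hS.eigenvalues_nonneg
  set U : Matrix (Fin d) (Fin d) ℝ := (hH.eigenvectorUnitary : Matrix (Fin d) (Fin d) ℝ) with hU
  have hUU : U * star U = 1 := (Matrix.mem_unitaryGroup_iff).mp hH.eigenvectorUnitary.2
  have hUU' : star U * U = 1 := (Matrix.mem_unitaryGroup_iff').mp hH.eigenvectorUnitary.2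
  have hspec : S = U * Matrix.diagonal μ * star U := by
    have := hH.spectral_theorem
    simpa using this
  -- trace S
  have htr : S.trace = ∑ i, μ i := by
    rw [hspec, Matrix.trace_mul_cycle, hUU', one_mul, Matrix.trace_diagonal]
  -- trace (Sᵀ * S)
  have hT : Sᵀ = S := hH
  have htr2 : (Sᵀ * S).trace = ∑ i, μ i ^ 2 := by
    rw [hT]
    have : S * S = U * (Matrix.diagonal μ * Matrix.diagonal μ) * star U := by
      rw [hspec]
      rw [show U * Matrix.diagonal μ * star U * (U * Matrix.diagonal μ * star U)
          = U * Matrix.diagonal μ * (star U * U) * Matrix.diagonal μ * star U by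
        noncomm_ring]
      rw [hUU']
      noncomm_ring
    rw [this, Matrix.trace_mul_cycle, ← Matrix.mul_assoc, hUU', one_mul,
      Matrix.diagonal_mul_diagonal, Matrix.trace_diagonal]
    exact Finset.sum_congr rfl fun i _ => (sq (μ i)).symm
  -- determinant
  have hplus : (1 : Matrix (Fin d) (Fin d) ℝ) + c • S
      = U * Matrix.diagonal (fun i => 1 + c * μ i) * star U := by
    have hdiag : (Matrix.diagonal fun i => 1 + c * μ i)
        = (1 : Matrix (Fin d) (Fin d) ℝ) + c • Matrix.diagonal μ := by
      ext i j
      by_cases h : i = j <;>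
        simp [h, Matrix.diagonal_apply, Matrix.one_apply]
    rw [hspec, hdiag, Matrix.mul_add, Matrix.add_mul, Matrix.mul_one, hUU,
      Matrix.mul_smul, Matrix.smul_mul]
  have hdet : ((1 : Matrix (Fin d) (Fin d) ℝ) + c • S).det = ∏ i, (1 + c * μ i) := by
    rw [hplus, Matrix.det_mul, Matrix.det_mul, mul_comm, ← mul_assoc, ← Matrix.det_mul,
      hUU', Matrix.det_one, one_mul, Matrix.det_diagonal]
  have hpos : ∀ i, (0:ℝ) < 1 + c * μ i := fun i => by
    have := mul_nonneg hcpos.le (hμ0 i); linarith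
  have hlog : Real.log (∏ i, (1 + c * μ i)) = ∑ i, Real.log (1 + c * μ i) :=
    Real.log_prod (fun i _ => (hpos i).ne')
  rw [hdet, hlog, htr, htr2]
  have key : ∀ i ∈ Finset.univ, c * μ i - Real.log (1 + c * μ i) ≤ (c * μ i) ^ 2 / 2 :=
    fun i _ => scalar_aux (mul_nonneg hcpos.le (hμ0 i))
  have := Finset.sum_le_sum key
  rw [Finset.sum_sub_distrib] at this
  have e1 : (∑ i, μ i) / σ ^ 2 = ∑ i, c * μ i := by
    rw [Finset.sum_div]
    exact Finset.sum_congr rfl fun i _ => by rw [hc]; ring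
  have e2 : (∑ i, μ i ^ 2) / (2 * σ ^ 4) = ∑ i, (c * μ i) ^ 2 / 2 := by
    rw [Finset.sum_div]
    refine Finset.sum_congr rfl fun i _ => ?_
    rw [hc]
    field_simp
  rw [e1, e2]
  exact this
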